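/- Let a < b be real numbers and let F = (X, Y) : ℝ × [a,b] → ℝ × [a,b] be a C¹ diffeomorphism onto ℝ × [a,b] such that: (i) F(x+1, y) = F(x, y) + (1, 0) for all (x,y) (F is a lift of a map of the annulus (ℝ/ℤ) × [a,b]); (ii) F preserves each boundary component, i.e. Y(x,a) = a and Y(x,b) = b for all x; (iii) ∂X/∂y(x,y) > 0 for all (x,y) (twist condition); (iv) F is area preserving, i.e. det DF(x,y) = 1 for all (x,y); (v) X(x,a) < x and X(x,b) > x for all x ∈ ℝ. Then F admits a fixed point: there exists (x₀,y₀) ∈ ℝ × [a,b] with F(x₀,y₀) = (x₀,y₀). -/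

import Mathlib

open Set MeasureTheory

lemma clm_det_formula (L : ℝ × ℝ →L[ℝ] ℝ × ℝ) :
    LinearMap.det (L : ℝ × ℝ →ₗ[ℝ] ℝ × ℝ)
      = (L (1,0)).1 * (L (0,1)).2 - (L (0,1)).1 * (L (1,0)).2 := by
  rw [← LinearMap.det_toMatrix (Module.Basis.finTwoProd ℝ), Matrix.det_fin_two]
  simp [LinearMap.toMatrix_apply, Module.Basis.coe_finTwoProd_repr, Module.Basis.finTwoProd_zero,
    Module.Basis.finTwoProd_one]


lemma region_measurable (c : ℝ) (f : ℝ → ℝ) (hf : Continuous f) (I : Set ℝ)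
    (hI : MeasurableSet I) :
    MeasurableSet {p : ℝ × ℝ | p.1 ∈ I ∧ p.2 ∈ Set.Icc c (f p.1)} := by
  have h1 : MeasurableSet {p : ℝ × ℝ | p.1 ∈ I} := measurable_fst hI
  have h2 : MeasurableSet {p : ℝ × ℝ | c ≤ p.2} := measurableSet_le measurable_const measurable_snd
  have h3 : MeasurableSet {p : ℝ × ℝ | p.2 ≤ f p.1} :=
    measurableSet_le measurable_snd (hf.measurable.comp measurable_fst)
  have : {p : ℝ × ℝ | p.1 ∈ I ∧ p.2 ∈ Set.Icc c (f p.1)}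
      = {p : ℝ × ℝ | p.1 ∈ I} ∩ ({p : ℝ × ℝ | c ≤ p.2} ∩ {p | p.2 ≤ f p.1}) := by
    ext p; simp [Set.mem_Icc, and_assoc]
  rw [this]; exact h1.inter (h2.inter h3)

lemma region_measure (c : ℝ) (f : ℝ → ℝ) (hf : Continuous f) (hcf : ∀ x, c ≤ f x) :
    volume {p : ℝ × ℝ | p.1 ∈ Set.Ico (0:ℝ) 1 ∧ p.2 ∈ Set.Icc c (f p.1)}
      = ENNReal.ofReal (∫ x in Set.Ico (0:ℝ) 1, (f x - c)) := by
  set s : Set (ℝ × ℝ) := {p : ℝ × ℝ | p.1 ∈ Set.Ico (0:ℝ) 1 ∧ p.2 ∈ Set.Icc c (f p.1)} with hs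
  have hm : MeasurableSet s := region_measurable c f hf _ measurableSet_Ico
  rw [Measure.volume_eq_prod, Measure.prod_apply hm]
  have hslice : ∀ x : ℝ, volume (Prod.mk x ⁻¹' s)
      = (Set.Ico (0:ℝ) 1).indicator (fun x => ENNReal.ofReal (f x - c)) x := by
    intro x
    by_cases hx : x ∈ Set.Ico (0:ℝ) 1
    · have : Prod.mk x ⁻¹' s = Set.Icc c (f x) := by
        ext y; simp only [hs, Set.mem_setOf_eq, Set.mem_preimage]
        exact ⟨fun h => h.2, fun h => ⟨hx, h⟩⟩
      rw [this, Real.volume_Icc, Set.indicator_of_mem hx]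
    · have : Prod.mk x ⁻¹' s = ∅ := by
        ext y
        simp only [hs, Set.mem_setOf_eq, Set.mem_preimage, Set.mem_empty_iff_false, iff_false]
        exact fun h => hx h.1
      rw [this, Set.indicator_of_notMem hx, measure_empty]
  rw [lintegral_congr hslice, lintegral_indicator measurableSet_Ico]
  have hint : IntegrableOn (fun x => f x - c) (Set.Ico (0:ℝ) 1) :=
    ((hf.sub continuous_const).integrableOn_Icc (a := 0) (b := 1)).mono_set
      Set.Ico_subset_Icc_self
  rw [ofReal_integral_eq_lintegral_ofReal hint
    (Filter.Eventually.of_forall fun x => sub_nonneg.2 (hcf x))]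

lemma unfold_measure (B : Set (ℝ × ℝ)) (hB : MeasurableSet B)
    (hdisj : ∀ m n : ℤ, m ≠ n →
      Disjoint ((fun p : ℝ × ℝ => p + ((m:ℝ), 0)) '' B) ((fun p : ℝ × ℝ => p + ((n:ℝ), 0)) '' B)) :
    volume ((⋃ n : ℤ, (fun p : ℝ × ℝ => p + ((n:ℝ), 0)) '' B)
        ∩ (Set.Ico (0:ℝ) 1 ×ˢ (Set.univ : Set ℝ))) = volume B := by
  set D : ℤ → Set (ℝ × ℝ) := fun n => Set.Ico (n:ℝ) (n+1) ×ˢ (Set.univ : Set ℝ) with hD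
  have hDm : ∀ n, MeasurableSet (D n) := fun n => measurableSet_Ico.prod MeasurableSet.univ
  have hBn_eq : ∀ n : ℤ, (fun p : ℝ × ℝ => p + ((n:ℝ), 0)) '' B
      = (fun p : ℝ × ℝ => p + (-(n:ℝ), 0)) ⁻¹' B := by
    intro n; ext q
    simp only [Set.mem_image, Set.mem_preimage]
    constructor
    · rintro ⟨p, hp, rfl⟩
      have : p + ((n:ℝ), 0) + (-(n:ℝ), 0) = p := by ext <;> simp
      rwa [this]
    · intro h; exact ⟨q + (-(n:ℝ), 0), h, by simp [Prod.ext_iff]⟩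
  have hBnm : ∀ n : ℤ, MeasurableSet ((fun p : ℝ × ℝ => p + ((n:ℝ), 0)) '' B) := by
    intro n; rw [hBn_eq]
    exact hB.preimage (measurable_id.add_const _)
  have hfloor : ∀ (m : ℤ) (x : ℝ), x ∈ Set.Ico (m:ℝ) (m+1) → ⌊x⌋ = m := by
    intro m x hx
    exact Int.floor_eq_iff.2 ⟨hx.1, hx.2⟩
  have hDdisj : ∀ m n : ℤ, m ≠ n → Disjoint (D m) (D n) := by
    intro m n hmn
    rw [Set.disjoint_left]
    rintro ⟨x, y⟩ h1 h2
    exact hmn ((hfloor m x h1.1).symm.trans (hfloor n x h2.1))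
  have hDcover : (⋃ n : ℤ, D n) = Set.univ := by
    ext ⟨x, y⟩
    simp only [Set.mem_iUnion, Set.mem_univ, iff_true, hD, Set.mem_prod, Set.mem_Ico]
    exact ⟨⌊x⌋, ⟨Int.floor_le x, Int.lt_floor_add_one x⟩, trivial⟩
  -- step 1 : volume B = ∑' n, volume (B ∩ D n)
  have step1 : volume B = ∑' n : ℤ, volume (B ∩ D n) := by
    conv_lhs => rw [show B = ⋃ n : ℤ, B ∩ D n by rw [← Set.inter_iUnion, hDcover, Set.inter_univ]]
    exact measure_iUnion
      (fun m n hmn => ((hDdisj m n hmn).mono Set.inter_subset_right Set.inter_subset_right))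
      (fun n => hB.inter (hDm n))
  -- step 2
  have hD0 : Set.Ico (0:ℝ) 1 ×ˢ (Set.univ : Set ℝ) = D 0 := by
    simp [hD]
  rw [hD0, Set.iUnion_inter]
  rw [measure_iUnion
      (fun m n hmn => ((hdisj m n hmn).mono Set.inter_subset_left Set.inter_subset_left))
      (fun n => (hBnm n).inter (hDm 0))]
  -- step 3 : volume (Bn n ∩ D 0) = volume (B ∩ D (-n))
  have step3 : ∀ n : ℤ, volume (((fun p : ℝ × ℝ => p + ((n:ℝ), 0)) '' B) ∩ D 0)
      = volume (B ∩ D (-n)) := by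
    intro n
    have hset : ((fun p : ℝ × ℝ => p + ((n:ℝ), 0)) '' B) ∩ D 0
        = (fun p : ℝ × ℝ => p + (-(n:ℝ), 0)) ⁻¹' (B ∩ D (-n)) := by
      rw [hBn_eq]
      ext ⟨x, y⟩
      simp only [Set.mem_inter_iff, Set.mem_preimage, hD, Set.mem_prod, Set.mem_Ico,
        Set.mem_univ, and_true, Prod.fst_add, Int.cast_neg, Int.cast_zero]
      constructor
      · rintro ⟨h1, h2, h3⟩
        exact ⟨h1, by linarith, by push_cast; linarith⟩
      · rintro ⟨h1, h2, h3⟩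
        refine ⟨h1, by linarith, by push_cast at h3 ⊢; linarith⟩
    rw [hset, measure_preimage_add_right]
  simp_rw [step3]
  rw [← (Equiv.neg ℤ).tsum_eq (fun n => volume (B ∩ D n))] at step1
  exact step1.symm

/-- **The Poincaré–Birkhoff theorem for twist maps of the annulus**, stated for a lift
`F = (X, Y) : ℝ × [a,b] → ℝ × [a,b]` of a map of the annulus `(ℝ/ℤ) × [a,b]`:
if `F` is a `C¹` diffeomorphism of the strip which commutes with the deck transformation
`(x,y) ↦ (x+1,y)`, preserves each boundary component, satisfies the twist condition
`∂X/∂y > 0`, is area preserving (`det DF = 1`), and moves the two boundary lines in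
opposite directions (`X(x,a) < x` and `X(x,b) > x`), then `F` has a fixed point. -/
theorem poincare_birkhoff_twist (a b : ℝ) (hab : a < b) (X Y : ℝ → ℝ → ℝ)
    -- F is C¹ on the strip ℝ × [a,b]
    (hC1 : ContDiffOn ℝ 1 (fun p : ℝ × ℝ => (X p.1 p.2, Y p.1 p.2))
      (Set.univ ×ˢ Set.Icc a b))
    -- F is a bijection of the strip onto itself (with `hC1` and `harea`, a C¹
    -- diffeomorphism of the strip onto itself)
    (hbij : Set.BijOn (fun p : ℝ × ℝ => (X p.1 p.2, Y p.1 p.2))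
      (Set.univ ×ˢ Set.Icc a b) (Set.univ ×ˢ Set.Icc a b))
    -- (i) F is a lift: F(x+1, y) = F(x, y) + (1, 0)
    (hlift : ∀ x : ℝ, ∀ y ∈ Set.Icc a b, X (x + 1) y = X x y + 1 ∧ Y (x + 1) y = Y x y)
    -- (ii) F preserves each boundary component
    (hbdry : ∀ x : ℝ, Y x a = a ∧ Y x b = b)
    -- (iii) twist condition ∂X/∂y > 0
    (htwist : ∀ x : ℝ, ∀ y ∈ Set.Icc a b, 0 < derivWithin (X x) (Set.Icc a b) y)
    -- (iv) F is area preserving: det DF = 1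
    (harea : ∀ x : ℝ, ∀ y ∈ Set.Icc a b,
      deriv (fun x' => X x' y) x * derivWithin (Y x) (Set.Icc a b) y
        - derivWithin (X x) (Set.Icc a b) y * deriv (fun x' => Y x' y) x = 1)
    -- (v) the boundaries are moved in opposite directions
    (hmove : ∀ x : ℝ, X x a < x ∧ x < X x b) :
    ∃ x₀ y₀ : ℝ, y₀ ∈ Set.Icc a b ∧ X x₀ y₀ = x₀ ∧ Y x₀ y₀ = y₀ := by
  set F : ℝ × ℝ → ℝ × ℝ := fun p => (X p.1 p.2, Y p.1 p.2) with hF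
  set S : Set (ℝ × ℝ) := Set.univ ×ˢ Set.Icc a b with hS
  have hmemS : ∀ p : ℝ × ℝ, p ∈ S ↔ p.2 ∈ Set.Icc a b := by
    intro p; simp [hS]
  have hFc : ContinuousOn F S := hC1.continuousOn
  -- continuity of x ↦ F (x, y) for fixed y ∈ Icc a b
  have hFxc : ∀ y ∈ Set.Icc a b, Continuous (fun x : ℝ => F (x, y)) := by
    intro y hy
    rw [← continuousOn_univ]
    exact hFc.comp ((continuous_id.prodMk continuous_const).continuousOn)
      (fun x _ => (hmemS (x, y)).2 hy)
  -- continuity of y ↦ F (x, y) on Icc a b for fixed x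
  have hFyc : ∀ x : ℝ, ContinuousOn (fun y : ℝ => F (x, y)) (Set.Icc a b) := by
    intro x
    exact hFc.comp ((continuous_const.prodMk continuous_id).continuousOn)
      (fun y hy => (hmemS (x, y)).2 hy)
  -- strict monotonicity of X x on Icc a b
  have hmono : ∀ x : ℝ, StrictMonoOn (X x) (Set.Icc a b) := by
    intro x
    apply strictMonoOn_of_deriv_pos (convex_Icc a b)
      ((continuous_fst.comp_continuousOn (hFyc x)))
    intro y hy
    rw [interior_Icc] at hy
    rw [← derivWithin_of_mem_nhds (Icc_mem_nhds hy.1 hy.2)]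
    exact htwist x y (Set.mem_Icc.2 ⟨hy.1.le, hy.2.le⟩)
  have hXyc : ∀ x : ℝ, ContinuousOn (X x) (Set.Icc a b) :=
    fun x => continuous_fst.comp_continuousOn (hFyc x)
  have hXxc : ∀ y ∈ Set.Icc a b, Continuous (fun x => X x y) :=
    fun y hy => continuous_fst.comp (hFxc y hy)
  have hinj : Set.InjOn F S := hbij.injOn
  -- existence of the curve g
  have hg_ex : ∀ x : ℝ, ∃ y, y ∈ Set.Icc a b ∧ X x y = x := by
    intro x
    have h1 : x ∈ Set.Icc (X x a) (X x b) := ⟨(hmove x).1.le, (hmove x).2.le⟩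
    obtain ⟨y, hy1, hy2⟩ := intermediate_value_Icc hab.le (hXyc x) h1
    exact ⟨y, hy1, hy2⟩
  choose g hg1 hg2 using hg_ex
  have haQ : a ∈ Set.Icc a b := ⟨le_refl a, hab.le⟩
  have hbQ : b ∈ Set.Icc a b := ⟨hab.le, le_refl b⟩
  have hga : ∀ x, a < g x := by
    intro x
    rcases lt_or_eq_of_le (hg1 x).1 with h | h
    · exact h
    · exact absurd (by rw [h]; exact hg2 x) (ne_of_lt (hmove x).1)
  have hgb : ∀ x, g x < b := by
    intro x
    rcases lt_or_eq_of_le (hg1 x).2 with h | h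
    · exact h
    · exact absurd (h ▸ hg2 x : X x b = x) (LT.lt.ne' (hmove x).2)
  have huniq : ∀ x y, y ∈ Set.Icc a b → X x y = x → y = g x := by
    intro x y hy hxy
    exact (hmono x).injOn hy (hg1 x) (hxy.trans (hg2 x).symm)
  -- continuity of g
  have hgc : Continuous g := by
    rw [continuous_iff_continuousAt]
    intro x₀
    rw [Metric.continuousAt_iff]
    intro ε hε
    set y₁ := max a (g x₀ - ε/2) with hy₁
    set y₂ := min b (g x₀ + ε/2) with hy₂
    have hy₁m : y₁ ∈ Set.Icc a b := ⟨le_max_left _ _,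
      max_le hab.le (by linarith [hgb x₀, hε])⟩
    have hy₂m : y₂ ∈ Set.Icc a b := ⟨le_min hab.le (by linarith [hga x₀, hε]), min_le_left _ _⟩
    have hy₁lt : y₁ < g x₀ := max_lt (hga x₀) (by linarith)
    have hy₂gt : g x₀ < y₂ := lt_min (hgb x₀) (by linarith)
    have h1 : X x₀ y₁ < x₀ := by
      have := hmono x₀ hy₁m (hg1 x₀) hy₁lt; rwa [hg2 x₀] at this
    have h2 : x₀ < X x₀ y₂ := by
      have := hmono x₀ (hg1 x₀) hy₂m hy₂gt; rwa [hg2 x₀] at this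
    have hc1 : Continuous (fun x => X x y₁ - x) := (hXxc y₁ hy₁m).sub continuous_id
    have hc2 : Continuous (fun x => X x y₂ - x) := (hXxc y₂ hy₂m).sub continuous_id
    have ho : IsOpen {x : ℝ | X x y₁ - x < 0 ∧ 0 < X x y₂ - x} :=
      (isOpen_lt hc1 continuous_const).inter (isOpen_lt continuous_const hc2)
    have hx₀o : x₀ ∈ {x : ℝ | X x y₁ - x < 0 ∧ 0 < X x y₂ - x} :=
      ⟨by simp [sub_neg]; linarith, by simp [sub_pos]; linarith⟩
    obtain ⟨δ, hδ, hball⟩ := Metric.isOpen_iff.1 ho x₀ hx₀o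
    refine ⟨δ, hδ, fun {x} hx => ?_⟩
    have hx' := hball hx
    have hxl : X x y₁ < x := by have := hx'.1; simp at this; linarith
    have hxr : x < X x y₂ := by have := hx'.2; simp at this; linarith
    have hgl : y₁ < g x := by
      by_contra hcon
      push_neg at hcon
      have := (hmono x).monotoneOn (hg1 x) hy₁m hcon
      rw [hg2 x] at this; linarith
    have hgr : g x < y₂ := by
      by_contra hcon
      push_neg at hcon
      have := (hmono x).monotoneOn hy₂m (hg1 x) hcon
      rw [hg2 x] at this; linarith
    have e1 : g x₀ - ε/2 ≤ y₁ := le_max_right _ _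
    have e2 : y₂ ≤ g x₀ + ε/2 := min_le_right _ _
    rw [Real.dist_eq, abs_sub_lt_iff]
    constructor <;> linarith
  -- integer equivariance
  have hfwd : ∀ k : ℕ, ∀ x : ℝ, ∀ y ∈ Set.Icc a b,
      X (x + k) y = X x y + k ∧ Y (x + k) y = Y x y := by
    intro k
    induction k with
    | zero => intro x y hy; simp
    | succ k ih =>
      intro x y hy
      have h1 := hlift (x + k) y hy
      have h2 := ih x y hy
      push_cast
      rw [show x + ((k:ℝ) + 1) = (x + (k:ℝ)) + 1 by ring, h1.1, h1.2, h2.1, h2.2]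
      exact ⟨by ring, rfl⟩
  have hbwd : ∀ k : ℕ, ∀ x : ℝ, ∀ y ∈ Set.Icc a b,
      X (x - k) y = X x y - k ∧ Y (x - k) y = Y x y := by
    intro k
    induction k with
    | zero => intro x y hy; simp
    | succ k ih =>
      intro x y hy
      have h1 := hlift (x - ((k:ℝ) + 1)) y hy
      have h2 := ih x y hy
      rw [show x - ((k:ℝ) + 1) + 1 = x - (k:ℝ) by ring, h2.1, h2.2] at h1
      push_cast
      rw [show x - ((k:ℝ) + 1) = x - ((k:ℝ)+1) by ring]
      constructor
      · have := h1.1; linarith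
      · exact h1.2.symm
  have heqv : ∀ n : ℤ, ∀ x : ℝ, ∀ y ∈ Set.Icc a b,
      X (x + n) y = X x y + n ∧ Y (x + n) y = Y x y := by
    intro n x y hy
    obtain ⟨k, rfl | rfl⟩ := Int.eq_nat_or_neg n
    · push_cast
      exact hfwd k x y hy
    · push_cast
      rw [show x + -(k:ℝ) = x - (k:ℝ) by ring]
      have := hbwd k x y hy
      exact ⟨by rw [this.1]; ring, this.2⟩
  -- periodicity of g
  have hgper : ∀ n : ℤ, ∀ x : ℝ, g (x + n) = g x := by
    intro n x
    have h1 : X (x + n) (g x) = x + n := by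
      rw [(heqv n x (g x) (hg1 x)).1, hg2 x]
    exact (huniq (x + n) (g x) (hg1 x) h1).symm
  -- the image curve
  set G : ℝ → ℝ := fun x => Y x (g x) with hGdef
  have hgraph : ∀ t : ℝ, F (t, g t) = (t, G t) := by
    intro t
    simp only [hF, hGdef]
    exact Prod.ext (hg2 t) rfl
  have hGc : Continuous G := by
    have : Continuous (fun x : ℝ => F (x, g x)) := by
      rw [← continuousOn_univ]
      exact hFc.comp (continuous_id.prodMk hgc).continuousOn
        (fun x _ => (hmemS (x, g x)).2 (hg1 x))
    exact continuous_snd.comp this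
  -- surjectivity of boundary maps: for every z there is x with X x a = z
  have hsurj_bot : ∀ z : ℝ, ∃ x : ℝ, X x a = z := by
    intro z
    set n : ℕ := ⌈|z - X z a|⌉₊ with hn
    have hn1 : |z - X z a| ≤ n := Nat.le_ceil _
    have e1 : X (z - (n:ℝ)) a = X z a - n := by
      have := (heqv (-(n:ℤ)) z a haQ).1
      push_cast at this ⊢
      rw [show z - (n:ℝ) = z + (-(n:ℝ)) by ring, this]; ring
    have e2 : X (z + (n:ℝ)) a = X z a + n := by
      have := (heqv (n:ℤ) z a haQ).1
      push_cast at this ⊢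
      rw [this]
    have hzn : z - (n:ℝ) ≤ z + (n:ℝ) := by
      have : (0:ℝ) ≤ n := Nat.cast_nonneg n
      linarith
    have habs := abs_le.1 hn1
    have hz1 : X (z - (n:ℝ)) a ≤ z := by rw [e1]; linarith [habs.1, habs.2]
    have hz2 : z ≤ X (z + (n:ℝ)) a := by rw [e2]; linarith [habs.1, habs.2]
    obtain ⟨x, _, hx2⟩ := intermediate_value_Icc hzn ((hXxc a haQ).continuousOn) ⟨hz1, hz2⟩
    exact ⟨x, hx2⟩
  have hsurj_top : ∀ z : ℝ, ∃ x : ℝ, X x b = z := by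
    intro z
    set n : ℕ := ⌈|z - X z b|⌉₊ with hn
    have hn1 : |z - X z b| ≤ n := Nat.le_ceil _
    have e1 : X (z - (n:ℝ)) b = X z b - n := by
      have := (heqv (-(n:ℤ)) z b hbQ).1
      push_cast at this ⊢
      rw [show z - (n:ℝ) = z + (-(n:ℝ)) by ring, this]; ring
    have e2 : X (z + (n:ℝ)) b = X z b + n := by
      have := (heqv (n:ℤ) z b hbQ).1
      push_cast at this ⊢
      rw [this]
    have hzn : z - (n:ℝ) ≤ z + (n:ℝ) := by
      have : (0:ℝ) ≤ n := Nat.cast_nonneg n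
      linarith
    have habs := abs_le.1 hn1
    have hz1 : X (z - (n:ℝ)) b ≤ z := by rw [e1]; linarith [habs.1, habs.2]
    have hz2 : z ≤ X (z + (n:ℝ)) b := by rw [e2]; linarith [habs.1, habs.2]
    obtain ⟨x, _, hx2⟩ := intermediate_value_Icc hzn ((hXxc b hbQ).continuousOn) ⟨hz1, hz2⟩
    exact ⟨x, hx2⟩
  -- G stays strictly inside (a, b)
  have hGa : ∀ x : ℝ, a < G x := by
    intro x
    rcases lt_or_eq_of_le ((hmemS (F (x, g x))).1 (hbij.mapsTo ((hmemS (x, g x)).2 (hg1 x)))).1 with h | h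
    · rw [hgraph] at h; exact h
    · exfalso
      obtain ⟨x', hx'⟩ := hsurj_bot x
      have hFx' : F (x', a) = (x, a) := by
        simp only [hF]; exact Prod.ext hx' (hbdry x').1
      have hFx : F (x, g x) = (x, a) := by
        rw [hgraph]; exact Prod.ext rfl h.symm
      have := hinj ((hmemS (x', a)).2 haQ) ((hmemS (x, g x)).2 (hg1 x)) (hFx'.trans hFx.symm)
      have h2 : a = g x := congrArg Prod.snd this
      exact absurd h2.symm (ne_of_gt (hga x))
  have hGb : ∀ x : ℝ, G x < b := by
    intro x
    rcases lt_or_eq_of_le ((hmemS (F (x, g x))).1 (hbij.mapsTo ((hmemS (x, g x)).2 (hg1 x)))).2 with h | h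
    · rw [hgraph] at h; exact h
    · exfalso
      obtain ⟨x', hx'⟩ := hsurj_top x
      have hFx' : F (x', b) = (x, b) := by
        simp only [hF]; exact Prod.ext hx' (hbdry x').2
      have hFx : F (x, g x) = (x, b) := by
        rw [hgraph]; exact Prod.ext rfl h
      have := hinj ((hmemS (x', b)).2 hbQ) ((hmemS (x, g x)).2 (hg1 x)) (hFx'.trans hFx.symm)
      have h2 : b = g x := congrArg Prod.snd this
      exact absurd h2 (ne_of_gt (hgb x))
  -- the regions below and above the curve
  set Um : Set (ℝ × ℝ) := {p : ℝ × ℝ | p.2 ∈ Set.Icc a b ∧ p.2 < g p.1} with hUm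
  set Up : Set (ℝ × ℝ) := {p : ℝ × ℝ | p.2 ∈ Set.Icc a b ∧ g p.1 < p.2} with hUp
  set Wm : Set (ℝ × ℝ) := {p : ℝ × ℝ | p.2 < G p.1} with hWm
  set Wp : Set (ℝ × ℝ) := {p : ℝ × ℝ | G p.1 < p.2} with hWp
  have hWmo : IsOpen Wm := isOpen_lt continuous_snd (hGc.comp continuous_fst)
  have hWpo : IsOpen Wp := isOpen_lt (hGc.comp continuous_fst) continuous_snd
  have hWdisj : Disjoint Wm Wp := by
    rw [Set.disjoint_left]
    intro p h1 h2
    exact absurd ((show p.2 < G p.1 from h1).trans (show G p.1 < p.2 from h2)) (lt_irrefl _)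
  have hUmS : Um ⊆ S := fun p hp => (hmemS p).2 hp.1
  have hUpS : Up ⊆ S := fun p hp => (hmemS p).2 hp.1
  -- preconnectedness of Um
  have hUmconn : IsPreconnected Um := by
    have hdecomp : Um = ⋃ x : ℝ, (({x} : Set ℝ) ×ˢ Set.Ico a (g x) ∪ (Set.univ ×ˢ ({a} : Set ℝ))) := by
      ext ⟨x, y⟩
      simp only [Set.mem_iUnion, Set.mem_union, Set.mem_prod, Set.mem_singleton_iff,
        Set.mem_Ico, Set.mem_univ, true_and, hUm, Set.mem_setOf_eq, Set.mem_Icc]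
      constructor
      · rintro ⟨⟨h1, h2⟩, h3⟩
        rcases eq_or_lt_of_le h1 with h | h
        · exact ⟨x, Or.inr h.symm⟩
        · exact ⟨x, Or.inl ⟨rfl, h1, h3⟩⟩
      · rintro ⟨x', h | h⟩
        · obtain ⟨rfl, h1, h2⟩ := h
          exact ⟨⟨h1, le_of_lt (lt_of_lt_of_le h2 (hg1 x).2)⟩, h2⟩
        · rw [h]
          exact ⟨⟨le_refl a, hab.le⟩, hga x⟩
    rw [hdecomp]
    apply isPreconnected_iUnion
    · refine ⟨(0, a), ?_⟩
      simp only [Set.mem_iInter]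
      intro x
      exact Or.inr (by simp)
    · intro x
      apply IsPreconnected.union (x, a)
      · simp [Set.mem_prod, hga x]
      · simp
      · exact isPreconnected_singleton.prod isPreconnected_Ico
      · exact isPreconnected_univ.prod isPreconnected_singleton
  have hUpconn : IsPreconnected Up := by
    have hdecomp : Up = ⋃ x : ℝ, (({x} : Set ℝ) ×ˢ Set.Ioc (g x) b ∪ (Set.univ ×ˢ ({b} : Set ℝ))) := by
      ext ⟨x, y⟩
      simp only [Set.mem_iUnion, Set.mem_union, Set.mem_prod, Set.mem_singleton_iff,
        Set.mem_Ioc, Set.mem_univ, true_and, hUp, Set.mem_setOf_eq, Set.mem_Icc]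
      constructor
      · rintro ⟨⟨h1, h2⟩, h3⟩
        rcases eq_or_lt_of_le h2 with h | h
        · exact ⟨x, Or.inr h⟩
        · exact ⟨x, Or.inl ⟨rfl, h3, h2⟩⟩
      · rintro ⟨x', h | h⟩
        · obtain ⟨rfl, h1, h2⟩ := h
          exact ⟨⟨le_of_lt (lt_of_le_of_lt (hg1 x).1 h1), h2⟩, h1⟩
        · rw [h]
          exact ⟨⟨hab.le, le_refl b⟩, hgb x⟩
    rw [hdecomp]
    apply isPreconnected_iUnion
    · refine ⟨(0, b), ?_⟩
      simp only [Set.mem_iInter]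
      intro x
      exact Or.inr (by simp)
    · intro x
      apply IsPreconnected.union (x, b)
      · simp [Set.mem_prod, hgb x]
      · simp
      · exact isPreconnected_singleton.prod isPreconnected_Ioc
      · exact isPreconnected_univ.prod isPreconnected_singleton
  -- images avoid the curve
  have himage_nograph : ∀ p ∈ S, p.2 ≠ g p.1 → F p ∈ Wm ∪ Wp := by
    intro p hp hne
    have hFpS : F p ∈ S := hbij.mapsTo hp
    rcases lt_trichotomy (F p).2 (G (F p).1) with h | h | h
    · exact Or.inl h
    · exfalso
      have h1 : F p = ((F p).1, G (F p).1) := Prod.ext rfl h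
      have h2 : F ((F p).1, g ((F p).1)) = ((F p).1, G (F p).1) := hgraph (F p).1
      have h3 := hinj hp ((hmemS ((F p).1, g (F p).1)).2 (hg1 (F p).1)) (h1.trans h2.symm)
      apply hne
      have := congrArg Prod.snd h3
      simp at this
      rw [this]
      have := congrArg Prod.fst h3
      simp at this
      rw [← this]
    · exact Or.inr h
  have hFUm : F '' Um ⊆ Wm := by
    apply IsPreconnected.subset_left_of_subset_union hWmo hWpo hWdisj
    · rintro q ⟨p, hp, rfl⟩
      exact himage_nograph p (hUmS hp) (ne_of_lt hp.2)
    · refine ⟨F (0, a), ⟨⟨(0, a), ⟨⟨le_refl a, hab.le⟩, hga 0⟩, rfl⟩, ?_⟩⟩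
      show (F (0, a)).2 < G (F (0, a)).1
      have : (F (0, a)).2 = a := (hbdry 0).1
      rw [this]
      exact hGa _
    · exact hUmconn.image _ (hFc.mono hUmS)
  have hFUp : F '' Up ⊆ Wp := by
    apply IsPreconnected.subset_right_of_subset_union hWmo hWpo hWdisj
    · rintro q ⟨p, hp, rfl⟩
      exact himage_nograph p (hUpS hp) (ne_of_gt hp.2)
    · refine ⟨F (0, b), ⟨⟨(0, b), ⟨⟨hab.le, le_refl b⟩, hgb 0⟩, rfl⟩, ?_⟩⟩
      show G (F (0, b)).1 < (F (0, b)).2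
      have : (F (0, b)).2 = b := (hbdry 0).2
      rw [this]
      exact hGb _
    · exact hUpconn.image _ (hFc.mono hUpS)
  -- the full region identity
  set A : Set (ℝ × ℝ) := {p : ℝ × ℝ | p.2 ∈ Set.Icc a (g p.1)} with hA
  set A' : Set (ℝ × ℝ) := {p : ℝ × ℝ | p.2 ∈ Set.Icc a (G p.1)} with hA'
  have hAS : A ⊆ S := by
    intro p hp
    exact (hmemS p).2 ⟨hp.1, hp.2.trans (hg1 p.1).2⟩
  have hregion : F '' A = A' := by
    apply Set.Subset.antisymm
    · rintro q ⟨p, hp, rfl⟩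
      rcases eq_or_lt_of_le hp.2 with h | h
      · have : F p = (p.1, G p.1) := by rw [show p = (p.1, g p.1) from Prod.ext rfl h]; exact hgraph p.1
        rw [this]
        exact ⟨le_of_lt (hGa p.1), le_refl _⟩
      · have hpUm : p ∈ Um := ⟨⟨hp.1, hp.2.trans (hg1 p.1).2⟩, h⟩
        have h1 : F p ∈ Wm := hFUm ⟨p, hpUm, rfl⟩
        have h2 : F p ∈ S := hbij.mapsTo (hAS hp)
        exact ⟨((hmemS _).1 h2).1, le_of_lt h1⟩
    · intro q hq
      have hqS : q ∈ S := (hmemS q).2 ⟨hq.1, hq.2.trans (le_of_lt (hGb q.1))⟩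
      obtain ⟨p, hpS, hpq⟩ := hbij.surjOn hqS
      refine ⟨p, ?_, hpq⟩
      by_contra hcon
      have hgp : g p.1 < p.2 := by
        rcases lt_or_ge (g p.1) p.2 with h | h
        · exact h
        · exact absurd ⟨((hmemS p).1 hpS).1, h⟩ hcon
      have : F p ∈ Wp := hFUp ⟨p, ⟨(hmemS p).1 hpS, hgp⟩, rfl⟩
      rw [hpq] at this
      exact absurd hq.2 (not_le.2 this)
  -- derivative and determinant facts
  set f' : ℝ × ℝ → (ℝ × ℝ →L[ℝ] ℝ × ℝ) := fun p => fderivWithin ℝ F S p with hf'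
  have hdiffOn : DifferentiableOn ℝ F S := hC1.differentiableOn one_ne_zero
  have hdd : ∀ p ∈ S, HasFDerivWithinAt F (f' p) S p ∧ (f' p).det = 1 := by
    rintro ⟨x, y⟩ hp
    have hL : HasFDerivWithinAt F (f' (x, y)) S (x, y) := (hdiffOn (x, y) hp).hasFDerivWithinAt
    refine ⟨hL, ?_⟩
    have hy : y ∈ Set.Icc a b := (hmemS (x, y)).1 hp
    -- horizontal derivative
    have hι1 : HasDerivAt (fun t : ℝ => ((t, y) : ℝ × ℝ)) ((1:ℝ), (0:ℝ)) x :=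
      (hasDerivAt_id x).prodMk (hasDerivAt_const x y)
    have hd1 : HasDerivAt (fun t => F (t, y)) (f' (x, y) (1, 0)) x := by
      have := hL.comp_hasDerivWithinAt x (hι1.hasDerivWithinAt (s := Set.univ))
        (fun t _ => (hmemS (t, y)).2 hy)
      rw [hasDerivWithinAt_univ] at this
      exact this
    have hdX1 : HasDerivAt (fun t => X t y) ((f' (x, y)) (1, 0)).1 x :=
      (ContinuousLinearMap.fst ℝ ℝ ℝ).hasFDerivAt.comp_hasDerivAt x hd1
    have hdY1 : HasDerivAt (fun t => Y t y) ((f' (x, y)) (1, 0)).2 x :=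
      (ContinuousLinearMap.snd ℝ ℝ ℝ).hasFDerivAt.comp_hasDerivAt x hd1
    -- vertical derivative
    have hι2 : HasDerivAt (fun t : ℝ => ((x, t) : ℝ × ℝ)) ((0:ℝ), (1:ℝ)) y :=
      (hasDerivAt_const y x).prodMk (hasDerivAt_id y)
    have hd2 : HasDerivWithinAt (fun t => F (x, t)) (f' (x, y) (0, 1)) (Set.Icc a b) y :=
      hL.comp_hasDerivWithinAt y (hι2.hasDerivWithinAt)
        (fun t ht => (hmemS (x, t)).2 ht)
    have hdX2 : HasDerivWithinAt (fun t => X x t) ((f' (x, y)) (0, 1)).1 (Set.Icc a b) y :=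
      (ContinuousLinearMap.fst ℝ ℝ ℝ).hasFDerivAt.comp_hasDerivWithinAt y hd2
    have hdY2 : HasDerivWithinAt (fun t => Y x t) ((f' (x, y)) (0, 1)).2 (Set.Icc a b) y :=
      (ContinuousLinearMap.snd ℝ ℝ ℝ).hasFDerivAt.comp_hasDerivWithinAt y hd2
    have hud : UniqueDiffWithinAt ℝ (Set.Icc a b) y := uniqueDiffOn_Icc hab y hy
    have e1 : deriv (fun x' => X x' y) x = ((f' (x, y)) (1, 0)).1 := hdX1.deriv
    have e2 : deriv (fun x' => Y x' y) x = ((f' (x, y)) (1, 0)).2 := hdY1.deriv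
    have e3 : derivWithin (X x) (Set.Icc a b) y = ((f' (x, y)) (0, 1)).1 := hdX2.derivWithin hud
    have e4 : derivWithin (Y x) (Set.Icc a b) y = ((f' (x, y)) (0, 1)).2 := hdY2.derivWithin hud
    have hdet := harea x y hy
    rw [e1, e2, e3, e4] at hdet
    show LinearMap.det _ = 1
    rw [clm_det_formula (f' (x, y))]
    linarith [hdet]
  -- measure-theoretic part
  by_contra hcon
  have hne : ∀ x, G x ≠ g x := by
    intro x h
    exact hcon ⟨x, g x, hg1 x, hg2 x, h⟩
  set A₀ : Set (ℝ × ℝ) := {p : ℝ × ℝ | p.1 ∈ Set.Ico (0:ℝ) 1 ∧ p.2 ∈ Set.Icc a (g p.1)} with hA₀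
  set E' : Set (ℝ × ℝ) := {p : ℝ × ℝ | p.1 ∈ Set.Ico (0:ℝ) 1 ∧ p.2 ∈ Set.Icc a (G p.1)} with hE'
  have hA₀S : A₀ ⊆ S := fun p hp => (hmemS p).2 ⟨hp.2.1, hp.2.2.trans (hg1 p.1).2⟩
  have hA₀m : MeasurableSet A₀ := region_measurable a g hgc _ measurableSet_Ico
  have hvolA₀ : volume A₀ = ENNReal.ofReal (∫ x in Set.Ico (0:ℝ) 1, (g x - a)) :=
    region_measure a g hgc (fun x => (hga x).le)
  have hvolE' : volume E' = ENNReal.ofReal (∫ x in Set.Ico (0:ℝ) 1, (G x - a)) :=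
    region_measure a G hGc (fun x => (hGa x).le)
  set B : Set (ℝ × ℝ) := F '' A₀ with hB
  have hfdA₀ : ∀ p ∈ A₀, HasFDerivWithinAt F (f' p) A₀ p :=
    fun p hp => ((hdd p (hA₀S hp)).1).mono hA₀S
  have hBm : MeasurableSet B := measurable_image_of_fderivWithin hA₀m hfdA₀ (hinj.mono hA₀S)
  -- change of variables
  have hvolB : volume B = volume A₀ := by
    have hcv := lintegral_abs_det_fderiv_eq_addHaar_image volume hA₀m hfdA₀ (hinj.mono hA₀S)
    have h1 : ∫⁻ p in A₀, ENNReal.ofReal |(f' p).det| = ∫⁻ p in A₀, (1:ENNReal) :=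
      setLIntegral_congr_fun hA₀m
        (fun p hp => by rw [(hdd p (hA₀S hp)).2]; simp)
    rw [h1, setLIntegral_one] at hcv
    exact hcv.symm
  -- equivariance of F under integer translations
  have hFeqvS : ∀ n : ℤ, ∀ p ∈ S, F (p + ((n:ℝ), 0)) = F p + ((n:ℝ), 0) := by
    rintro n ⟨x, y⟩ hp
    have hy : y ∈ Set.Icc a b := (hmemS (x, y)).1 hp
    have h := heqv n x y hy
    have hpt : ((x, y) : ℝ × ℝ) + ((n:ℝ), 0) = (x + n, y) := by simp
    rw [hpt]
    exact Prod.ext (by simpa using h.1) (by simpa using h.2)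
  -- translated copies of A₀
  have hA₀shift : ∀ n : ℤ, (fun p : ℝ × ℝ => p + ((n:ℝ), 0)) '' A₀
      = {p : ℝ × ℝ | p.1 ∈ Set.Ico ((n:ℝ)) (n+1) ∧ p.2 ∈ Set.Icc a (g p.1)} := by
    intro n
    ext ⟨x, y⟩
    simp only [Set.mem_image, Set.mem_setOf_eq, Set.mem_Ico, Set.mem_Icc, hA₀]
    constructor
    · rintro ⟨⟨x', y'⟩, ⟨⟨h1, h2⟩, h3, h4⟩, heq⟩
      have hx : x = x' + n := by
        have := congrArg Prod.fst heq; simpa using this.symm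
      have hy : y = y' := by
        have := congrArg Prod.snd heq; simpa using this.symm
      subst hx; subst hy
      refine ⟨⟨by linarith, by linarith⟩, h3, ?_⟩
      rwa [show x' + (n:ℝ) = x' + ((n:ℤ):ℝ) by push_cast; ring, hgper n x']
    · rintro ⟨⟨h1, h2⟩, h3, h4⟩
      refine ⟨(x - n, y), ⟨⟨show (0:ℝ) ≤ x - n by linarith, show x - (n:ℝ) < 1 by linarith⟩, h3, ?_⟩, ?_⟩
      · rwa [show x - (n:ℝ) = x + ((-n : ℤ):ℝ) by push_cast; ring, hgper (-n) x]
      · show (x - (n:ℝ) + (n:ℝ), y + 0) = (x, y)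
        simp
  have hshiftS : ∀ n : ℤ, (fun p : ℝ × ℝ => p + ((n:ℝ), 0)) '' A₀ ⊆ S := by
    intro n p hp
    rw [hA₀shift n] at hp
    exact (hmemS p).2 ⟨hp.2.1, hp.2.2.trans (hg1 p.1).2⟩
  -- translated copies of B
  have hBshift : ∀ n : ℤ, (fun p : ℝ × ℝ => p + ((n:ℝ), 0)) '' B
      = F '' ((fun p : ℝ × ℝ => p + ((n:ℝ), 0)) '' A₀) := by
    intro n
    rw [hB, Set.image_image, Set.image_image]
    apply Set.image_congr
    intro p hp
    exact (hFeqvS n p (hA₀S hp)).symm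
  have hdisjB : ∀ m n : ℤ, m ≠ n →
      Disjoint ((fun p : ℝ × ℝ => p + ((m:ℝ), 0)) '' B) ((fun p : ℝ × ℝ => p + ((n:ℝ), 0)) '' B) := by
    intro m n hmn
    rw [hBshift m, hBshift n, Set.disjoint_left]
    rintro q ⟨p1, hp1, rfl⟩ ⟨p2, hp2, heq⟩
    have hp12 : p2 = p1 := hinj (hshiftS n hp2) (hshiftS m hp1) heq
    subst hp12
    rw [hA₀shift m] at hp1
    rw [hA₀shift n] at hp2
    have h1 := hp1.1
    have h2 := hp2.1
    have : ⌊p2.1⌋ = m := Int.floor_eq_iff.2 ⟨h1.1, by exact_mod_cast h1.2⟩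
    have : ⌊p2.1⌋ = n := Int.floor_eq_iff.2 ⟨h2.1, by exact_mod_cast h2.2⟩
    omega
  -- the union of the translates is the region below the image curve
  have hAunion : (⋃ n : ℤ, (fun p : ℝ × ℝ => p + ((n:ℝ), 0)) '' A₀) = A := by
    ext ⟨x, y⟩
    simp only [Set.mem_iUnion]
    constructor
    · rintro ⟨n, hn⟩
      rw [hA₀shift n] at hn
      exact hn.2
    · intro hxy
      refine ⟨⌊x⌋, ?_⟩
      rw [hA₀shift ⌊x⌋]
      exact ⟨⟨Int.floor_le x, by exact_mod_cast Int.lt_floor_add_one x⟩, hxy⟩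
  have hBunion : (⋃ n : ℤ, (fun p : ℝ × ℝ => p + ((n:ℝ), 0)) '' B) = A' := by
    rw [← hregion, ← hAunion, Set.image_iUnion]
    exact Set.iUnion_congr (fun n => (hBshift n))
  -- apply the unfolding lemma
  have hunf := unfold_measure B hBm hdisjB
  rw [hBunion] at hunf
  have hE'eq : A' ∩ (Set.Ico (0:ℝ) 1 ×ˢ (Set.univ : Set ℝ)) = E' := by
    ext ⟨x, y⟩
    simp only [Set.mem_inter_iff, hA', hE', Set.mem_setOf_eq, Set.mem_prod, Set.mem_univ, and_true]
    tauto
  rw [hE'eq] at hunf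
  -- conclude the equality of integrals
  have hIg : IntegrableOn (fun x => g x - a) (Set.Ico (0:ℝ) 1) :=
    ((hgc.sub continuous_const).integrableOn_Icc (a := 0) (b := 1)).mono_set
      Set.Ico_subset_Icc_self
  have hIG : IntegrableOn (fun x => G x - a) (Set.Ico (0:ℝ) 1) :=
    ((hGc.sub continuous_const).integrableOn_Icc (a := 0) (b := 1)).mono_set
      Set.Ico_subset_Icc_self
  have hchain : ENNReal.ofReal (∫ x in Set.Ico (0:ℝ) 1, (G x - a))
      = ENNReal.ofReal (∫ x in Set.Ico (0:ℝ) 1, (g x - a)) := by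
    rw [← hvolE', ← hvolA₀, ← hvolB, ← hunf]
  have hg_nonneg : 0 ≤ ∫ x in Set.Ico (0:ℝ) 1, (g x - a) :=
    setIntegral_nonneg measurableSet_Ico (fun x _ => by linarith [hga x])
  have hG_nonneg : 0 ≤ ∫ x in Set.Ico (0:ℝ) 1, (G x - a) :=
    setIntegral_nonneg measurableSet_Ico (fun x _ => by linarith [hGa x])
  have hinteq : ∫ x in Set.Ico (0:ℝ) 1, (G x - a) = ∫ x in Set.Ico (0:ℝ) 1, (g x - a) :=
    (ENNReal.ofReal_eq_ofReal_iff hG_nonneg hg_nonneg).1 hchain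
  have hzero : ∫ x in Set.Ico (0:ℝ) 1, (G x - g x) = 0 := by
    have : (fun x => G x - g x) = fun x => (G x - a) - (g x - a) := by
      funext x; ring
    rw [this, integral_sub hIG hIg, hinteq, sub_self]
  -- sign dichotomy and contradiction
  have hsign : (∀ x, g x < G x) ∨ (∀ x, G x < g x) := by
    rcases lt_or_gt_of_ne (sub_ne_zero.2 (hne 0)) with h0 | h0
    · right
      intro x
      by_contra hx
      push_neg at hx
      have hx' : G x - g x > 0 := by
        rcases lt_or_eq_of_le hx with h | h
        · linarith
        · exact absurd h.symm (fun hh => hne x (by linarith [sub_eq_zero.1 (by linarith : G x - g x = 0)]))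
      have hiv := intermediate_value_uIcc (a := (0:ℝ)) (b := x)
        (f := fun t => G t - g t) ((hGc.sub hgc).continuousOn)
      have h0m : (0:ℝ) ∈ Set.uIcc (G 0 - g 0) (G x - g x) :=
        Set.mem_uIcc.2 (Or.inl ⟨h0.le, hx'.le⟩)
      obtain ⟨c, _, hc⟩ := hiv h0m
      exact hne c (by linarith [sub_eq_zero.1 hc])
    · left
      intro x
      by_contra hx
      push_neg at hx
      have hx' : G x - g x < 0 := by
        rcases lt_or_eq_of_le hx with h | h
        · linarith
        · exact absurd h (fun hh => hne x (by linarith))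
      have hiv := intermediate_value_uIcc (a := (0:ℝ)) (b := x)
        (f := fun t => G t - g t) ((hGc.sub hgc).continuousOn)
      have h0m : (0:ℝ) ∈ Set.uIcc (G 0 - g 0) (G x - g x) :=
        Set.mem_uIcc.2 (Or.inr ⟨hx'.le, h0.le⟩)
      obtain ⟨c, _, hc⟩ := hiv h0m
      exact hne c (by linarith [sub_eq_zero.1 hc])
  have hIoo : ∫ x in Set.Ico (0:ℝ) 1, (G x - g x) = ∫ x in (0:ℝ)..1, (G x - g x) := by
    rw [intervalIntegral.integral_of_le zero_le_one, integral_Ioc_eq_integral_Ioo,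
      integral_Ico_eq_integral_Ioo]
  rcases hsign with hs | hs
  · have hpos : 0 < ∫ x in (0:ℝ)..1, (G x - g x) :=
      intervalIntegral.intervalIntegral_pos_of_pos_on
        ((hGc.sub hgc).intervalIntegrable 0 1) (fun x _ => by linarith [hs x]) zero_lt_one
    rw [hIoo] at hzero
    linarith
  · have hpos : 0 < ∫ x in (0:ℝ)..1, (g x - G x) :=
      intervalIntegral.intervalIntegral_pos_of_pos_on
        ((hgc.sub hGc).intervalIntegrable 0 1) (fun x _ => by linarith [hs x]) zero_lt_one
    have : ∫ x in (0:ℝ)..1, (g x - G x) = - ∫ x in (0:ℝ)..1, (G x - g x) := by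
      rw [← intervalIntegral.integral_neg]
      congr 1
      funext x; ring
    rw [hIoo] at hzero
    rw [this, hzero] at hpos
    linarith
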